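/- Let Φ be an m×k matrix, V a p×m matrix such that VΦ has full column rank, and define the V-dual Ψ_V := (VΦ)†V. Then Ψ_V is a left inverse of Φ, and for any m×m matrix H, ‖Ψ_V H‖_{∞→2} ≤ √p · ‖VH‖_{∞→∞} / σ_min(VΦ). -/

import Mathlib

open Matrix MeasureTheory Finset
noncomputable section

/-- Euclidean norm of a vector. -/
def norm2 {ι : Type*} [Fintype ι] (v : ι → ℝ) : ℝ := Real.sqrt (∑ i, (v i)^2)
/-- Sup norm of a vector. -/
def normInf {ι : Type*} (v : ι → ℝ) : ℝ := sSup {t | ∃ i, t = |v i|}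
/-- ℓ∞ → ℓ2 operator norm. -/
def normInfTo2 {ι κ : Type*} [Fintype ι] [Fintype κ] (A : Matrix κ ι ℝ) : ℝ :=
  sSup {t | ∃ v : ι → ℝ, (∀ j, |v j| ≤ 1) ∧ t = norm2 (A.mulVec v)}
/-- ℓ2 → ℓ2 (spectral) operator norm. -/
def norm2To2 {ι κ : Type*} [Fintype ι] [Fintype κ] (A : Matrix κ ι ℝ) : ℝ :=
  sSup {t | ∃ v : ι → ℝ, norm2 v ≤ 1 ∧ t = norm2 (A.mulVec v)}
/-- Smallest singular value. -/
def sigmaMin {ι κ : Type*} [Fintype ι] [Fintype κ] (A : Matrix κ ι ℝ) : ℝ :=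
  sInf {t | ∃ v : ι → ℝ, norm2 v = 1 ∧ t = norm2 (A.mulVec v)}
/-- ℓ∞ → ℓ∞ operator norm (max absolute row sum). -/
def normInfInf {ι κ : Type*} [Fintype ι] (A : Matrix κ ι ℝ) : ℝ :=
  sSup {t | ∃ i, t = ∑ j, |A i j|}
/-- The alphabet 𝒜_{L,δ}: L points, spacing 2δ, symmetric about 0. -/
def alphabet (L : ℕ) (δ : ℝ) : Set ℝ := {w | ∃ j : Fin L, w = (2*(j:ℝ) - (L:ℝ) + 1) * δ}
/-- Pseudoinverse of a full-column-rank matrix: A† = (AᵀA)⁻¹Aᵀ. -/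
def pinv {ι : Type*} [Fintype ι] {k : ℕ} (A : Matrix ι (Fin k) ℝ) : Matrix (Fin k) ι ℝ :=
  (Aᵀ*A)⁻¹ * Aᵀ

/-- the V-dual Ψ_V = (VΦ)†V is a left inverse of Φ and satisfies
    ‖Ψ_V H‖_{∞→2} ≤ √p ‖VH‖_{∞→∞} / σ_min(VΦ). -/
lemma norm2_nonneg {ι : Type*} [Fintype ι] (v : ι → ℝ) : 0 ≤ norm2 v := Real.sqrt_nonneg _

lemma norm2_smul {ι : Type*} [Fintype ι] (c : ℝ) (v : ι → ℝ) :
    norm2 (c • v) = |c| * norm2 v := by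
  unfold norm2
  rw [← Real.sqrt_sq_eq_abs, ← Real.sqrt_mul (sq_nonneg c), Finset.mul_sum]
  congr 1
  refine Finset.sum_congr rfl fun i _ => ?_
  simp [mul_pow]

lemma norm2_le_norm2 {ι : Type*} [Fintype ι] {v w : ι → ℝ}
    (h : ∑ i, (v i)^2 ≤ ∑ i, (w i)^2) : norm2 v ≤ norm2 w :=
  Real.sqrt_le_sqrt h

lemma norm2_eq_zero {ι : Type*} [Fintype ι] {v : ι → ℝ} (h : norm2 v = 0) : v = 0 := by
  have h2 : ∑ i, (v i)^2 = 0 := by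
    have hnn : (0:ℝ) ≤ ∑ i, (v i)^2 := Finset.sum_nonneg fun i _ => sq_nonneg _
    have := Real.sqrt_eq_zero'.mp h
    linarith
  funext i
  have := (Finset.sum_eq_zero_iff_of_nonneg (fun i _ => sq_nonneg (v i))).mp h2 i (mem_univ i)
  simpa [pow_eq_zero_iff] using this

lemma proj_contract {p k : ℕ} (A : Matrix (Fin p) (Fin k) ℝ)
    (hfull : IsUnit (Aᵀ*A).det) (w : Fin p → ℝ) :
    norm2 ((A * pinv A).mulVec w) ≤ norm2 w := by
  set P := A * pinv A with hP
  have hPt : Pᵀ = P := by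
    rw [hP]
    unfold pinv
    rw [Matrix.transpose_mul, Matrix.transpose_mul, Matrix.transpose_nonsing_inv,
      Matrix.transpose_mul, Matrix.transpose_transpose, Matrix.mul_assoc]
  have hPP : P * P = P := by
    rw [hP]
    unfold pinv
    have h0 : A * ((Aᵀ*A)⁻¹ * Aᵀ) * (A * ((Aᵀ*A)⁻¹ * Aᵀ))
        = A * ((Aᵀ*A)⁻¹ * ((Aᵀ*A) * ((Aᵀ*A)⁻¹ * Aᵀ))) := by
      simp only [Matrix.mul_assoc]
    rw [h0, ← Matrix.mul_assoc (Aᵀ*A), Matrix.mul_nonsing_inv _ hfull, Matrix.one_mul]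
  have key : ∑ i, ((P.mulVec w) i)^2 = (P.mulVec w) ⬝ᵥ w := by
    have h1 : (P.mulVec w) ⬝ᵥ (P.mulVec w) = (Pᵀ.mulVec (P.mulVec w)) ⬝ᵥ w := by
      rw [Matrix.dotProduct_mulVec, ← Matrix.mulVec_transpose]
    have h2 : Pᵀ.mulVec (P.mulVec w) = P.mulVec w := by
      rw [hPt, Matrix.mulVec_mulVec, hPP]
    rw [h2] at h1
    rw [← h1]
    simp [dotProduct, pow_two]
  have cs : ((P.mulVec w) ⬝ᵥ w)^2 ≤ (∑ i, ((P.mulVec w) i)^2) * (∑ i, (w i)^2) := by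
    simpa [dotProduct] using Finset.sum_mul_sq_le_sq_mul_sq univ (P.mulVec w) w
  have ha : (0:ℝ) ≤ ∑ i, ((P.mulVec w) i)^2 := Finset.sum_nonneg fun i _ => sq_nonneg _
  have hb : (0:ℝ) ≤ ∑ i, (w i)^2 := Finset.sum_nonneg fun i _ => sq_nonneg _
  apply norm2_le_norm2
  nlinarith [cs, key, ha, hb]

lemma norm2_continuous {ι : Type*} [Fintype ι] : Continuous (norm2 (ι := ι)) := by
  unfold norm2
  exact Real.continuous_sqrt.comp (by continuity)

lemma mulVec_continuous {ι κ : Type*} [Fintype ι] [Fintype κ] (A : Matrix κ ι ℝ) :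
    Continuous fun v : ι → ℝ => A.mulVec v := by
  refine continuous_pi fun i => ?_
  simp only [Matrix.mulVec, dotProduct]
  continuity

lemma sigmaMin_pos {p k : ℕ} (hk : 0 < k) (A : Matrix (Fin p) (Fin k) ℝ)
    (hfull : IsUnit (Aᵀ*A).det) : 0 < sigmaMin A := by
  set S : Set (Fin k → ℝ) := {v | norm2 v = 1} with hS
  have hclosed : IsClosed S := isClosed_eq norm2_continuous continuous_const
  have hbdd : Bornology.IsBounded S := by
    rw [Metric.isBounded_iff_subset_closedBall 0]
    refine ⟨1, fun v hv => ?_⟩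
    simp only [Metric.mem_closedBall, dist_zero_right]
    rw [pi_norm_le_iff_of_nonneg zero_le_one]
    intro i
    have h1 : (v i)^2 ≤ ∑ j, (v j)^2 :=
      Finset.single_le_sum (f := fun j => (v j)^2) (fun j _ => sq_nonneg _) (mem_univ i)
    have : |v i| ≤ norm2 v := by
      rw [← Real.sqrt_sq_eq_abs]
      exact Real.sqrt_le_sqrt h1
    have hv1 : norm2 v = 1 := hv
    rw [hv1] at this
    simpa using this
  have hcompact : IsCompact S := Metric.isCompact_of_isClosed_isBounded hclosed hbdd
  have hne : S.Nonempty := by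
    refine ⟨Pi.single ⟨0, hk⟩ 1, ?_⟩
    simp only [hS, Set.mem_setOf_eq, norm2]
    rw [Finset.sum_eq_single ⟨0, hk⟩]
    · simp
    · intro j _ hj; simp [Pi.single_apply, hj]
    · simp
  have hcont : ContinuousOn (fun v => norm2 (A.mulVec v)) S :=
    (norm2_continuous.comp (mulVec_continuous A)).continuousOn
  obtain ⟨v0, hv0S, hmin⟩ := hcompact.exists_isMinOn hne hcont
  have hv0 : norm2 v0 = 1 := hv0S
  have hε : 0 < norm2 (A.mulVec v0) := by
    rcases lt_or_eq_of_le (norm2_nonneg (A.mulVec v0)) with h | h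
    · exact h
    · exfalso
      have hz : A.mulVec v0 = 0 := norm2_eq_zero h.symm
      have hz2 : (Aᵀ*A).mulVec v0 = 0 := by
        rw [← Matrix.mulVec_mulVec, hz, Matrix.mulVec_zero]
      have : v0 = 0 := by
        have h1 : ((Aᵀ*A)⁻¹ * (Aᵀ*A)).mulVec v0 = 0 := by
          rw [← Matrix.mulVec_mulVec, hz2, Matrix.mulVec_zero]
        rwa [Matrix.nonsing_inv_mul _ hfull, Matrix.one_mulVec] at h1
      rw [this] at hv0
      simp [norm2] at hv0
  refine lt_of_lt_of_le hε (le_csInf ⟨_, v0, hv0, rfl⟩ ?_)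
  rintro t ⟨v, hv1, rfl⟩
  exact hmin hv1

lemma smul_mul_le {p k : ℕ} (A : Matrix (Fin p) (Fin k) ℝ) (u : Fin k → ℝ) :
    sigmaMin A * norm2 u ≤ norm2 (A.mulVec u) := by
  by_cases hu : u = 0
  · simp [hu, norm2, Matrix.mulVec_zero]
  · have hnu : 0 < norm2 u := by
      rcases lt_or_eq_of_le (norm2_nonneg u) with h | h
      · exact h
      · exact absurd (norm2_eq_zero h.symm) hu
    set c : ℝ := (norm2 u)⁻¹ with hc
    have hcpos : 0 < c := inv_pos.mpr hnu
    have hv' : norm2 (c • u) = 1 := by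
      rw [norm2_smul, abs_of_pos hcpos, hc, inv_mul_cancel₀ (ne_of_gt hnu)]
    have hle : sigmaMin A ≤ norm2 (A.mulVec (c • u)) := by
      apply csInf_le
      · exact ⟨0, by rintro t ⟨v, _, rfl⟩; exact norm2_nonneg _⟩
      · exact ⟨c • u, hv', rfl⟩
    rw [Matrix.mulVec_smul, norm2_smul, abs_of_pos hcpos] at hle
    calc sigmaMin A * norm2 u ≤ (c * norm2 (A.mulVec u)) * norm2 u :=
          mul_le_mul_of_nonneg_right hle (le_of_lt hnu)
      _ = norm2 (A.mulVec u) := by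
          rw [hc]; field_simp

theorem stmt_9 (m k p : ℕ) (Φ : Matrix (Fin m) (Fin k) ℝ)
    (V : Matrix (Fin p) (Fin m) ℝ)
    (hfull : IsUnit ((V * Φ)ᵀ * (V * Φ)).det)
    (H : Matrix (Fin m) (Fin m) ℝ) :
    (pinv (V * Φ) * V) * Φ = 1 ∧
    normInfTo2 ((pinv (V * Φ) * V) * H) ≤
      Real.sqrt p * normInfInf (V * H) / sigmaMin (V * Φ) := by
  set A := V * Φ with hA
  constructor
  · rw [Matrix.mul_assoc, ← hA]
    unfold pinv
    rw [Matrix.mul_assoc, Matrix.nonsing_inv_mul _ hfull]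
  · -- nonnegativity of RHS
    have hN0 : 0 ≤ normInfInf (V * H) :=
      Real.sSup_nonneg (by rintro t ⟨i, rfl⟩; exact Finset.sum_nonneg fun j _ => abs_nonneg _)
    have hs0 : 0 ≤ sigmaMin A :=
      Real.sInf_nonneg (by rintro t ⟨v, _, rfl⟩; exact norm2_nonneg _)
    have hRHS : 0 ≤ Real.sqrt p * normInfInf (V * H) / sigmaMin A :=
      div_nonneg (mul_nonneg (Real.sqrt_nonneg _) hN0) hs0
    apply Real.sSup_le _ hRHS
    rintro t ⟨v, hv, rfl⟩
    rcases Nat.eq_zero_or_pos k with hk | hk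
    · -- k = 0 : the matrix has no rows
      subst hk
      have : norm2 ((pinv A * V * H).mulVec v) = 0 := by
        simp [norm2]
      rw [this]; exact hRHS
    -- k > 0, hence p > 0
    have hp : 0 < p := by
      by_contra hp0
      push_neg at hp0
      interval_cases p
      have hz : Aᵀ * A = 0 := by
        ext i j
        simp [Matrix.mul_apply]
      rw [hz] at hfull
      have : ¬ IsUnit ((0 : Matrix (Fin k) (Fin k) ℝ).det) := by
        haveI : Nonempty (Fin k) := Fin.pos_iff_nonempty.mp hk
        rw [Matrix.det_zero]
        exact not_isUnit_zero
      exact this hfull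
    set N := normInfInf (V * H) with hNdef
    set w := (V * H).mulVec v with hw
    -- |w i| ≤ N
    have hwN : ∀ i, |w i| ≤ N := by
      intro i
      have h1 : |w i| ≤ ∑ j, |(V * H) i j| := by
        rw [hw]
        simp only [Matrix.mulVec, dotProduct]
        refine (Finset.abs_sum_le_sum_abs _ _).trans ?_
        refine Finset.sum_le_sum fun j _ => ?_
        rw [abs_mul]
        calc |(V*H) i j| * |v j| ≤ |(V*H) i j| * 1 :=
              mul_le_mul_of_nonneg_left (hv j) (abs_nonneg _)
          _ = |(V*H) i j| := mul_one _
      refine h1.trans ?_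
      have hset : {t | ∃ i, t = ∑ j, |(V*H) i j|} = Set.range fun i => ∑ j, |(V*H) i j| := by
        ext t; simp [eq_comm, Set.range]
      have hbdd : BddAbove {t | ∃ i, t = ∑ j, |(V*H) i j|} := by
        rw [hset]; exact (Set.finite_range _).bddAbove
      exact le_csSup hbdd ⟨i, rfl⟩
    -- norm2 w ≤ √p * N
    have hw2 : norm2 w ≤ Real.sqrt p * N := by
      have hsum : ∑ i, (w i)^2 ≤ (p : ℝ) * N^2 := by
        calc ∑ i, (w i)^2 ≤ ∑ _i : Fin p, N^2 := by
              refine Finset.sum_le_sum fun i _ => ?_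
              rw [← sq_abs]
              exact pow_le_pow_left₀ (abs_nonneg _) (hwN i) 2
          _ = (p : ℝ) * N^2 := by simp [mul_comm]
      calc norm2 w ≤ Real.sqrt ((p:ℝ) * N^2) := Real.sqrt_le_sqrt hsum
        _ = Real.sqrt p * N := by
            rw [Real.sqrt_mul (Nat.cast_nonneg p), Real.sqrt_sq hN0]
    -- main chain
    have hassoc : (pinv A * V * H).mulVec v = (pinv A).mulVec w := by
      rw [hw, Matrix.mulVec_mulVec, Matrix.mul_assoc]
    set u := (pinv A).mulVec w with hu
    have hAu : A.mulVec u = (A * pinv A).mulVec w := by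
      rw [hu, Matrix.mulVec_mulVec]
    have hchain : sigmaMin A * norm2 u ≤ Real.sqrt p * N := by
      calc sigmaMin A * norm2 u ≤ norm2 (A.mulVec u) := smul_mul_le A u
        _ = norm2 ((A * pinv A).mulVec w) := by rw [hAu]
        _ ≤ norm2 w := proj_contract A hfull w
        _ ≤ Real.sqrt p * N := hw2
    have hspos : 0 < sigmaMin A := sigmaMin_pos hk A hfull
    rw [hassoc]
    rw [le_div_iff₀ hspos]
    linarith [hchain]
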